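/- Let β: ℕ → [0,∞) satisfy β(m) ≤ C_β b^m with b ∈ (0,1). Then for any T ≥ 1, T^{-4} Σ_{t₁,t₂,s₁,s₂ = 1}^{T} β(⌊m(t₁,t₂,s₁,s₂)/4⌋) ≤ C/T³ for a constant C depending only on C_β and b, where m(t₁,t₂,s₁,s₂) denotes the maximal pairwise distance among the four indices. -/

import Mathlib

/-- Maximal pairwise distance among four natural-number indices. -/
def maxDist4 (t₁ t₂ s₁ s₂ : ℕ) : ℕ :=
  max (max (max (Nat.dist t₁ t₂) (Nat.dist t₁ s₁)) (max (Nat.dist t₁ s₂) (Nat.dist t₂ s₁)))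
    (max (Nat.dist t₂ s₂) (Nat.dist s₁ s₂))


lemma myGeomLe {r : ℝ} (hr0 : 0 ≤ r) (hr1 : r < 1) (n : ℕ) :
    ∑ i ∈ Finset.range n, r ^ i ≤ 1 / (1 - r) := by
  have h1r : 0 < 1 - r := by linarith
  rw [geom_sum_eq (by linarith : r ≠ 1)]
  have : (r ^ n - 1) / (r - 1) = (1 - r ^ n) / (1 - r) := by
    rw [← neg_div_neg_eq]; ring_nf
  rw [this]
  gcongr
  · linarith [pow_nonneg hr0 n]

lemma sum_pow_dist_le {r : ℝ} (hr0 : 0 ≤ r) (hr1 : r < 1) (t T : ℕ) :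
    ∑ s ∈ Finset.Icc 1 T, r ^ (Nat.dist t s) ≤ 2 / (1 - r) := by
  have h1r : 0 < 1 - r := by linarith
  rw [← Finset.sum_filter_add_sum_filter_not (Finset.Icc 1 T) (· ≤ t)]
  have h1 : ∑ s ∈ (Finset.Icc 1 T).filter (· ≤ t), r ^ (Nat.dist t s) ≤ 1 / (1 - r) := by
    calc ∑ s ∈ (Finset.Icc 1 T).filter (· ≤ t), r ^ (Nat.dist t s)
        = ∑ j ∈ ((Finset.Icc 1 T).filter (· ≤ t)).image (fun s => t - s), r ^ j := by
          rw [Finset.sum_image]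
          · apply Finset.sum_congr rfl
            intro s hs
            simp only [Finset.mem_filter] at hs
            congr 1
            simp [Nat.dist]; omega
          intro x hx y hy hxy
          simp only [Finset.mem_coe, Finset.mem_filter] at hx hy hxy
          omega
      _ ≤ ∑ j ∈ Finset.range (t + 1), r ^ j := by
          apply Finset.sum_le_sum_of_subset_of_nonneg
          · intro j hj
            simp only [Finset.mem_image, Finset.mem_filter] at hj
            obtain ⟨x, hx, rfl⟩ := hj
            simp only [Finset.mem_range]
            omega
          · intro i _ _; positivity
      _ ≤ 1 / (1 - r) := myGeomLe hr0 hr1 _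
  have h2 : ∑ s ∈ (Finset.Icc 1 T).filter (fun s => ¬ s ≤ t), r ^ (Nat.dist t s) ≤ 1 / (1 - r) := by
    calc ∑ s ∈ (Finset.Icc 1 T).filter (fun s => ¬ s ≤ t), r ^ (Nat.dist t s)
        = ∑ j ∈ ((Finset.Icc 1 T).filter (fun s => ¬ s ≤ t)).image (fun s => s - t), r ^ j := by
          rw [Finset.sum_image]
          · apply Finset.sum_congr rfl
            intro s hs
            simp only [Finset.mem_filter] at hs
            congr 1
            simp [Nat.dist]; omega
          intro x hx y hy hxy
          simp only [Finset.mem_coe, Finset.mem_filter] at hx hy hxy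
          omega
      _ ≤ ∑ j ∈ Finset.range (T + 1), r ^ j := by
          apply Finset.sum_le_sum_of_subset_of_nonneg
          · intro j hj
            simp only [Finset.mem_image, Finset.mem_filter, Finset.mem_Icc] at hj
            obtain ⟨x, hx, rfl⟩ := hj
            simp only [Finset.mem_range]
            omega
          · intro i _ _; positivity
      _ ≤ 1 / (1 - r) := myGeomLe hr0 hr1 _
  refine le_trans (add_le_add h1 h2) (le_of_eq ?_)
  ring

/-- the quadruple sum of β(⌊m/4⌋) over indices in {1,...,T}⁴, with
β exponentially decaying, is O(T), so divided by T⁴ it is ≤ C/T³. -/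
theorem stmt14 (Cβ b : ℝ) (βc : ℕ → ℝ) (hCβ : 0 < Cβ) (hb0 : 0 < b) (hb1 : b < 1)
    (hβ0 : ∀ m, 0 ≤ βc m) (hβ : ∀ m, βc m ≤ Cβ * b ^ m) :
    ∃ C : ℝ, 0 < C ∧ ∀ T : ℕ, 1 ≤ T →
      (1 / (T : ℝ) ^ 4) * ∑ t₁ ∈ Finset.Icc 1 T, ∑ t₂ ∈ Finset.Icc 1 T,
          ∑ s₁ ∈ Finset.Icc 1 T, ∑ s₂ ∈ Finset.Icc 1 T,
            βc (maxDist4 t₁ t₂ s₁ s₂ / 4)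
        ≤ C / (T : ℝ) ^ 3 := by
  set r : ℝ := b ^ ((12 : ℝ)⁻¹) with hrdef
  have hr0 : 0 < r := Real.rpow_pos_of_pos hb0 _
  have hr1 : r < 1 := Real.rpow_lt_one hb0.le hb1 (by norm_num)
  have hbr : b = r ^ (12 : ℕ) := by
    rw [hrdef, ← Real.rpow_natCast (b ^ ((12:ℝ)⁻¹)) 12, ← Real.rpow_mul hb0.le]
    norm_num
  have hD : 0 < 2 / (1 - r) := by
    apply div_pos (by norm_num); linarith
  set K : ℝ := Cβ * r⁻¹ ^ (9:ℕ) * (2 / (1 - r)) ^ (3:ℕ) with hKdef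
  have hK : 0 < K := by positivity
  refine ⟨K, hK, ?_⟩
  intro T hT
  have hT0 : (0:ℝ) < (T:ℝ) := by exact_mod_cast hT
  -- pointwise key bound
  have hkey : ∀ t₁ t₂ s₁ s₂ : ℕ, βc (maxDist4 t₁ t₂ s₁ s₂ / 4) ≤
      (Cβ * r⁻¹ ^ (9:ℕ)) *
        (r ^ Nat.dist t₁ t₂ * (r ^ Nat.dist t₁ s₁ * r ^ Nat.dist t₁ s₂)) := by
    intro t₁ t₂ s₁ s₂
    set m := maxDist4 t₁ t₂ s₁ s₂ with hm
    have hd12 : Nat.dist t₁ t₂ ≤ m := by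
      simp only [hm, maxDist4]; exact le_max_of_le_left (le_max_of_le_left (le_max_left _ _))
    have hd13 : Nat.dist t₁ s₁ ≤ m := by
      simp only [hm, maxDist4]; exact le_max_of_le_left (le_max_of_le_left (le_max_right _ _))
    have hd14 : Nat.dist t₁ s₂ ≤ m := by
      simp only [hm, maxDist4]; exact le_max_of_le_left (le_max_of_le_right (le_max_left _ _))
    have hexp : Nat.dist t₁ t₂ + Nat.dist t₁ s₁ + Nat.dist t₁ s₂ ≤ 12 * (m / 4) + 9 := by
      omega
    have h1 : βc (m / 4) ≤ Cβ * r ^ (12 * (m / 4)) := by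
      calc βc (m / 4) ≤ Cβ * b ^ (m / 4) := hβ _
        _ = Cβ * r ^ (12 * (m / 4)) := by rw [hbr, ← pow_mul]
    have h2 : r ^ (12 * (m / 4) + 9) ≤
        r ^ (Nat.dist t₁ t₂ + Nat.dist t₁ s₁ + Nat.dist t₁ s₂) :=
      pow_le_pow_of_le_one hr0.le hr1.le hexp
    have h3 : r ^ (12 * (m / 4)) ≤
        r⁻¹ ^ (9:ℕ) * r ^ (Nat.dist t₁ t₂ + Nat.dist t₁ s₁ + Nat.dist t₁ s₂) := by
      rw [inv_pow]
      rw [← mul_le_mul_iff_right₀ (pow_pos hr0 9)]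
      calc r ^ (9:ℕ) * r ^ (12 * (m / 4)) = r ^ (12 * (m / 4) + 9) := by
            rw [← pow_add]; ring_nf
        _ ≤ r ^ (Nat.dist t₁ t₂ + Nat.dist t₁ s₁ + Nat.dist t₁ s₂) := h2
        _ = r ^ (9:ℕ) * ((r ^ (9:ℕ))⁻¹ * r ^ (Nat.dist t₁ t₂ + Nat.dist t₁ s₁ + Nat.dist t₁ s₂)) := by
            rw [← mul_assoc, mul_inv_cancel₀ (by positivity), one_mul]
    calc βc (m / 4) ≤ Cβ * r ^ (12 * (m / 4)) := h1
      _ ≤ Cβ * (r⁻¹ ^ (9:ℕ) * r ^ (Nat.dist t₁ t₂ + Nat.dist t₁ s₁ + Nat.dist t₁ s₂)) := by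
          exact mul_le_mul_of_nonneg_left h3 hCβ.le
      _ = (Cβ * r⁻¹ ^ (9:ℕ)) *
            (r ^ Nat.dist t₁ t₂ * (r ^ Nat.dist t₁ s₁ * r ^ Nat.dist t₁ s₂)) := by
          rw [pow_add, pow_add]; ring
  -- bound the quadruple sum
  have hsum : ∑ t₁ ∈ Finset.Icc 1 T, ∑ t₂ ∈ Finset.Icc 1 T,
      ∑ s₁ ∈ Finset.Icc 1 T, ∑ s₂ ∈ Finset.Icc 1 T,
        βc (maxDist4 t₁ t₂ s₁ s₂ / 4) ≤ (T : ℝ) * K := by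
    have hinner : ∀ t₁ : ℕ, ∑ t₂ ∈ Finset.Icc 1 T, ∑ s₁ ∈ Finset.Icc 1 T,
        ∑ s₂ ∈ Finset.Icc 1 T, βc (maxDist4 t₁ t₂ s₁ s₂ / 4) ≤ K := by
      intro t₁
      calc ∑ t₂ ∈ Finset.Icc 1 T, ∑ s₁ ∈ Finset.Icc 1 T, ∑ s₂ ∈ Finset.Icc 1 T,
            βc (maxDist4 t₁ t₂ s₁ s₂ / 4)
          ≤ ∑ t₂ ∈ Finset.Icc 1 T, ∑ s₁ ∈ Finset.Icc 1 T, ∑ s₂ ∈ Finset.Icc 1 T,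
            (Cβ * r⁻¹ ^ (9:ℕ)) *
              (r ^ Nat.dist t₁ t₂ * (r ^ Nat.dist t₁ s₁ * r ^ Nat.dist t₁ s₂)) := by
            refine Finset.sum_le_sum fun t₂ _ => Finset.sum_le_sum fun s₁ _ =>
              Finset.sum_le_sum fun s₂ _ => hkey t₁ t₂ s₁ s₂
        _ = (Cβ * r⁻¹ ^ (9:ℕ)) * ((∑ t₂ ∈ Finset.Icc 1 T, r ^ Nat.dist t₁ t₂) *
              ((∑ s₁ ∈ Finset.Icc 1 T, r ^ Nat.dist t₁ s₁) *
               (∑ s₂ ∈ Finset.Icc 1 T, r ^ Nat.dist t₁ s₂))) := by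
            simp only [Finset.mul_sum, Finset.sum_mul]
            refine Finset.sum_congr rfl fun t₂ _ => Finset.sum_congr rfl fun s₁ _ =>
              Finset.sum_congr rfl fun s₂ _ => by ring
        _ ≤ (Cβ * r⁻¹ ^ (9:ℕ)) * ((2 / (1 - r)) * ((2 / (1 - r)) * (2 / (1 - r)))) := by
            have hnn : ∀ t : ℕ, (0:ℝ) ≤ ∑ s ∈ Finset.Icc 1 T, r ^ Nat.dist t s :=
              fun t => Finset.sum_nonneg fun _ _ => by positivity
            have h := sum_pow_dist_le hr0.le hr1 t₁ T
            exact mul_le_mul_of_nonneg_left (mul_le_mul h (mul_le_mul h h (hnn t₁) hD.le)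
              (mul_nonneg (hnn t₁) (hnn t₁)) hD.le) (by positivity)
        _ = K := by rw [hKdef]; ring
    calc ∑ t₁ ∈ Finset.Icc 1 T, ∑ t₂ ∈ Finset.Icc 1 T, ∑ s₁ ∈ Finset.Icc 1 T,
          ∑ s₂ ∈ Finset.Icc 1 T, βc (maxDist4 t₁ t₂ s₁ s₂ / 4)
        ≤ ∑ t₁ ∈ Finset.Icc 1 T, K := Finset.sum_le_sum fun t₁ _ => hinner t₁
      _ = (T : ℝ) * K := by
          rw [Finset.sum_const, Nat.card_Icc]; simp
  calc (1 / (T : ℝ) ^ 4) * ∑ t₁ ∈ Finset.Icc 1 T, ∑ t₂ ∈ Finset.Icc 1 T,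
        ∑ s₁ ∈ Finset.Icc 1 T, ∑ s₂ ∈ Finset.Icc 1 T, βc (maxDist4 t₁ t₂ s₁ s₂ / 4)
      ≤ (1 / (T : ℝ) ^ 4) * ((T : ℝ) * K) := by
        apply mul_le_mul_of_nonneg_left hsum (by positivity)
    _ = K / (T : ℝ) ^ 3 := by field_simp
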